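/- For partitions γ and μ with |μ| < |γ|, the evaluation of the polynomial p̄_γ (defined below) at Ξ_μ is 0. Moreover, if |μ| = |γ| then p̄_γ[Ξ_μ] = z_γ if γ = μ and 0 otherwise. -/

import Mathlib

open scoped BigOperators

/-- Same eigenvalue collection, as a multiset. -/
noncomputable def xiM (μ : Multiset ℕ) : Multiset ℂ :=
  μ.bind fun r => (Multiset.range r).map fun k =>
    Complex.exp (2 * Real.pi * Complex.I * k / r)

/-- Evaluation of the power sum `p_n` on a multiset of values. -/
noncomputable def pEvalM (n : ℕ) (S : Multiset ℂ) : ℂ := (S.map (· ^ n)).sum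

/-- The ring of symmetric functions, modeled as polynomials in the
(algebraically independent) power sums `p_1, p_2, …`:  variable `k : ℕ+` stands for `p_k`. -/
abbrev SymF := MvPolynomial ℕ+ ℂ

/-- Evaluation of a symmetric function at the eigenvalues `Ξ_μ` of a permutation
matrix of cycle type `μ` (each `p_k` goes to `p_k[Ξ_μ]`). -/
noncomputable def evalXi (μ : Multiset ℕ) (f : SymF) : ℂ :=
  MvPolynomial.eval (fun k : ℕ+ => pEvalM (k : ℕ) (xiM μ)) f

/-- `z_γ = ∏ i^{m_i(γ)} m_i(γ)!`. -/
noncomputable def zPart (γ : Multiset ℕ) : ℂ :=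
  ∏ i ∈ γ.toFinset, ((i : ℂ) ^ γ.count i * Nat.factorial (γ.count i))

/-- The Möbius-inverted power sum `(1/i) ∑_{d ∣ i} μ(i/d) p_d`. -/
noncomputable def aFun (i : ℕ) : SymF :=
  ((i : ℂ)⁻¹) • ∑ d ∈ i.divisors.attach,
    (((ArithmeticFunction.moebius (i / d.1) : ℤ) : ℂ)) •
      MvPolynomial.X (⟨d.1, Nat.pos_of_mem_divisors d.2⟩ : ℕ+)

/-- `p̄_{i^r} = i^r ((1/i) ∑_{d|i} μ(i/d) p_d)_r` with the falling factorial. -/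
noncomputable def pbar (i r : ℕ) : SymF :=
  ((i : ℂ) ^ r) • ∏ j ∈ Finset.range r, (aFun i - MvPolynomial.C (j : ℂ))

/-- `p̄_γ = ∏_i p̄_{i^{m_i(γ)}}`. -/
noncomputable def pbarM (γ : Multiset ℕ) : SymF :=
  ∏ i ∈ γ.toFinset, pbar i (γ.count i)

/-- Sum of `d`-th powers of the `r`-th roots of unity. -/
lemma roots_pow_sum (r d : ℕ) (hd : 0 < d) :
    ∑ k ∈ Finset.range r, Complex.exp (2 * Real.pi * Complex.I * k / r) ^ d
      = if r ∣ d then (r : ℂ) else 0 := by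
  rcases Nat.eq_zero_or_pos r with rfl | hr
  · have : ¬ (0 ∣ d) := by omega
    simp [this]
  have hrC : (r : ℂ) ≠ 0 := Nat.cast_ne_zero.mpr hr.ne'
  set z : ℂ := Complex.exp (2 * Real.pi * Complex.I * d / r) with hz
  have hterm : ∀ k ∈ Finset.range r,
      Complex.exp (2 * Real.pi * Complex.I * k / r) ^ d = z ^ k := by
    intro k _
    rw [← Complex.exp_nat_mul, ← Complex.exp_nat_mul]
    congr 1
    field_simp
  rw [Finset.sum_congr rfl hterm]
  have hzr : z ^ r = 1 := by
    rw [← Complex.exp_nat_mul, Complex.exp_eq_one_iff]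
    exact ⟨d, by field_simp; norm_cast⟩
  by_cases hdvd : r ∣ d
  · obtain ⟨c, hc⟩ := hdvd
    have hz1 : z = 1 := by
      rw [hz, Complex.exp_eq_one_iff]
      refine ⟨c, ?_⟩
      subst hc
      push_cast
      field_simp
    rw [if_pos ⟨c, hc⟩]
    simp [hz1]
  · have hz1 : z ≠ 1 := by
      intro h
      rw [hz, Complex.exp_eq_one_iff] at h
      obtain ⟨n, hn⟩ := h
      have h2 : (2 * (Real.pi : ℂ) * Complex.I) ≠ 0 := by
        simp [Real.pi_ne_zero, Complex.I_ne_zero, Complex.ofReal_ne_zero]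
      have hd' : (d : ℂ) = n * r := by
        rw [div_eq_iff hrC] at hn
        have : (2 * (Real.pi : ℂ) * Complex.I) * d
            = (2 * (Real.pi : ℂ) * Complex.I) * (n * r) := by
          rw [mul_comm] at hn ⊢
          linear_combination hn
        exact mul_left_cancel₀ h2 this
      have hdz : (d : ℤ) = n * r := by exact_mod_cast hd'
      exact hdvd (Int.natCast_dvd_natCast.mp ⟨n, by rw [hdz]; ring⟩)
    rw [if_neg hdvd]
    have : ∑ k ∈ Finset.range r, z ^ k = 0 := by
      rw [geom_sum_eq hz1, hzr]; simp
    exact this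

/-- `p_d[Ξ_μ] = ∑_{d'∣d} d' m_{d'}(μ)`. -/
lemma pEval_eq (μ : Multiset ℕ) (d : ℕ) (hd : 0 < d) :
    pEvalM d (xiM μ) = ∑ d' ∈ d.divisors, ((d' : ℂ) * μ.count d') := by
  unfold pEvalM xiM
  rw [Multiset.map_bind, Multiset.sum_bind]
  have h1 : ∀ r : ℕ,
      (((Multiset.range r).map fun k =>
        Complex.exp (2 * Real.pi * Complex.I * k / r)).map (· ^ d)).sum
      = if r ∣ d then (r : ℂ) else 0 := by
    intro r
    have hcoe : (do let a ← Multiset.range r; pure ((a : ℕ) : ℂ) : Multiset ℂ)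
        = (Multiset.range r).map (fun a : ℕ => (a : ℂ)) := Multiset.bind_singleton _ _
    rw [hcoe, Multiset.map_map, Multiset.map_map]
    exact roots_pow_sum r d hd
  rw [Multiset.map_congr rfl fun r _ => h1 r]
  rw [Finset.sum_multiset_map_count]
  have h2 : ∀ m ∈ μ.toFinset,
      μ.count m • (if m ∣ d then (m : ℂ) else 0)
      = if m ∣ d then (m : ℂ) * μ.count m else 0 := by
    intro m _
    split <;> simp [mul_comm]
  rw [Finset.sum_congr rfl h2, ← Finset.sum_filter]
  apply Finset.sum_subset
  · intro x hx
    simp only [Finset.mem_filter, Multiset.mem_toFinset] at hx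
    exact Nat.mem_divisors.mpr ⟨hx.2, hd.ne'⟩
  · intro x hx hnx
    simp only [Finset.mem_filter, Multiset.mem_toFinset, not_and] at hnx
    have hxd : x ∣ d := (Nat.mem_divisors.mp hx).1
    by_cases hxm : x ∈ μ
    · exact absurd hxd (hnx hxm)
    · simp [Multiset.count_eq_zero_of_notMem hxm]

/-- `(aFun i)[Ξ_μ] = m_i(μ)` by Möbius inversion. -/
lemma eval_aFun (μ : Multiset ℕ) (i : ℕ) (hi : 0 < i) :
    evalXi μ (aFun i) = (μ.count i : ℂ) := by
  have hiC : (i : ℂ) ≠ 0 := Nat.cast_ne_zero.mpr hi.ne'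
  have hstep : evalXi μ (aFun i)
      = (i : ℂ)⁻¹ * ∑ d ∈ i.divisors,
          (((ArithmeticFunction.moebius (i / d) : ℤ) : ℂ)) * pEvalM d (xiM μ) := by
    rw [show aFun i = (i : ℂ)⁻¹ • ∑ d ∈ i.divisors.attach,
      (((ArithmeticFunction.moebius (i / d.1) : ℤ) : ℂ)) •
        MvPolynomial.X (R := ℂ) (σ := ℕ+) (⟨d.1, Nat.pos_of_mem_divisors d.2⟩) from rfl]
    unfold evalXi
    simp only [MvPolynomial.smul_eq_C_mul, map_mul, map_sum, MvPolynomial.eval_C,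
      MvPolynomial.eval_X]
    congr 1
    refine (Finset.sum_congr rfl fun d _ => ?_).trans (Finset.sum_attach i.divisors
      (fun d => (((ArithmeticFunction.moebius (i / d) : ℤ) : ℂ)) * pEvalM d (xiM μ)))
    exact congrArg₂ _ rfl (MvPolynomial.eval_X _)
  have hmob : ∀ n : ℕ, 0 < n → ∑ x ∈ n.divisorsAntidiagonal,
      (ArithmeticFunction.moebius x.1) • pEvalM x.2 (xiM μ)
      = ((n : ℂ) * μ.count n) := by
    apply (ArithmeticFunction.sum_eq_iff_sum_smul_moebius_eq
      (f := fun n => ((n : ℂ) * μ.count n)) (g := fun n => pEvalM n (xiM μ))).mp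
    intro n hn
    exact (pEval_eq μ n hn).symm
  have h2 := hmob i hi
  rw [Nat.sum_divisorsAntidiagonal' (f := fun a b =>
      (ArithmeticFunction.moebius a) • pEvalM b (xiM μ))] at h2
  rw [hstep]
  have h3 : ∑ d ∈ i.divisors,
      (((ArithmeticFunction.moebius (i / d) : ℤ) : ℂ)) * pEvalM d (xiM μ)
      = (i : ℂ) * μ.count i := by
    rw [← h2]
    apply Finset.sum_congr rfl
    intro d _
    rw [zsmul_eq_mul]
  rw [h3, ← mul_assoc, inv_mul_cancel₀ hiC, one_mul]

lemma prod_range_cast_sub (m : ℕ) : ∀ r : ℕ,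
    ∏ j ∈ Finset.range r, ((m : ℂ) - j) = (Nat.descFactorial m r : ℂ)
  | 0 => by simp
  | (r + 1) => by
    rw [Finset.prod_range_succ, prod_range_cast_sub m r, Nat.descFactorial_succ]
    rcases lt_or_ge m r with h | h
    · rw [Nat.descFactorial_of_lt h]
      simp
    · push_cast [Nat.cast_sub h]
      ring

lemma eval_pbar (μ : Multiset ℕ) (i : ℕ) (hi : 0 < i) (r : ℕ) :
    evalXi μ (pbar i r) = (i : ℂ) ^ r * (Nat.descFactorial (μ.count i) r : ℂ) := by
  have ha := eval_aFun μ i hi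
  unfold evalXi pbar
  simp only [MvPolynomial.smul_eq_C_mul, map_mul, map_prod, map_sub]
  congr 1
  · exact MvPolynomial.eval_C _
  rw [← prod_range_cast_sub (μ.count i) r]
  apply Finset.prod_congr rfl
  intro j _
  unfold evalXi at ha
  rw [ha]
  exact congrArg₂ _ rfl (MvPolynomial.eval_C _)

lemma eval_pbarM (γ μ : Multiset ℕ) (hγ : ∀ i ∈ γ, 0 < i) :
    evalXi μ (pbarM γ) = ∏ i ∈ γ.toFinset,
      ((i : ℂ) ^ γ.count i * (Nat.descFactorial (μ.count i) (γ.count i) : ℂ)) := by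
  unfold evalXi pbarM
  rw [map_prod]
  apply Finset.prod_congr rfl
  intro i hi
  exact eval_pbar μ i (hγ i (Multiset.mem_toFinset.mp hi)) (γ.count i)

/-- For partitions `γ, μ`: if `|μ| < |γ|` then `p̄_γ[Ξ_μ] = 0`, and if `|μ| = |γ|` then
`p̄_γ[Ξ_μ] = z_γ δ_{γ=μ}`. -/
theorem pbar_eval (γ μ : Multiset ℕ) (hγ : ∀ i ∈ γ, 0 < i) (hμ : ∀ i ∈ μ, 0 < i) :
    (μ.sum < γ.sum → evalXi μ (pbarM γ) = 0) ∧
    (μ.sum = γ.sum → evalXi μ (pbarM γ) = if γ = μ then zPart γ else 0) := by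
  have key := eval_pbarM γ μ hγ
  have zero_of : (∃ i ∈ γ.toFinset, μ.count i < γ.count i) → evalXi μ (pbarM γ) = 0 := by
    rintro ⟨i, hi, hlt⟩
    rw [key]
    apply Finset.prod_eq_zero hi
    rw [Nat.descFactorial_of_lt hlt]
    simp
  have le_of_not : (¬ ∃ i ∈ γ.toFinset, μ.count i < γ.count i) → γ ≤ μ := by
    intro h
    rw [Multiset.le_iff_count]
    intro a
    by_cases ha : a ∈ γ.toFinset
    · push_neg at h
      exact h a ha
    · have : γ.count a = 0 :=
        Multiset.count_eq_zero_of_notMem (fun hm => ha (Multiset.mem_toFinset.mpr hm))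
      omega
  constructor
  · intro hlt
    apply zero_of
    by_contra h
    obtain ⟨δ, hδ⟩ := Multiset.le_iff_exists_add.mp (le_of_not h)
    rw [hδ, Multiset.sum_add] at hlt
    omega
  · intro heq
    by_cases hgm : γ = μ
    · subst hgm
      rw [if_pos rfl, key, zPart]
      apply Finset.prod_congr rfl
      intro i _
      rw [Nat.descFactorial_self]
    · rw [if_neg hgm]
      apply zero_of
      by_contra h
      obtain ⟨δ, hδ⟩ := Multiset.le_iff_exists_add.mp (le_of_not h)
      rw [hδ, Multiset.sum_add] at heq
      have hδ0 : δ.sum = 0 := by omega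
      have hδempty : δ = 0 := by
        rw [Multiset.eq_zero_iff_forall_notMem]
        intro x hx
        have hxμ : x ∈ μ := by rw [hδ]; exact Multiset.mem_add.mpr (Or.inr hx)
        have := hμ x hxμ
        have := Multiset.sum_eq_zero_iff.mp hδ0 x hx
        omega
      rw [hδempty, add_zero] at hδ
      exact hgm hδ.symm
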